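/- Suppose θ : ℝ → ℝ is a C³ solution of βωk²θ''' + (k² − ω²)θ'' − αωθ' − sin(θ) + γ = 0 with θ(z+2π) = θ(z) + 2π, α > 0, β > 0, γ > 0, k > 0, ω > 0. Then (γ−1)/α ≤ ω ≤ γ/α. -/

import Mathlib

open Real MeasureTheory intervalIntegral

/-- Frequency bounds for a rotating fluxon wave: if `θ` is a `C³` solution of
`βωk²θ''' + (k²−ω²)θ'' − αωθ' − sin θ + γ = 0` with `θ(z+2π) = θ(z) + 2π` and
`α, β, γ, k, ω > 0`, then `(γ−1)/α ≤ ω ≤ γ/α`. -/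
theorem fluxon_frequency_bounds
    (α β γ k ω : ℝ) (hα : 0 < α) (hβ : 0 < β) (hγ : 0 < γ) (hk : 0 < k)
    (hω : 0 < ω)
    (θ : ℝ → ℝ) (hθ : ContDiff ℝ 3 θ)
    (hper : ∀ z, θ (z + 2*π) = θ z + 2*π)
    (hODE : ∀ z, β * ω * k^2 * iteratedDeriv 3 θ z
        + (k^2 - ω^2) * iteratedDeriv 2 θ z
        - α * ω * deriv θ z - Real.sin (θ z) + γ = 0) :
    (γ - 1) / α ≤ ω ∧ ω ≤ γ / α := by
  have pi_pos := Real.pi_pos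
  -- regularity
  have hθ3 : ContDiff ℝ (2+1) θ := by exact_mod_cast hθ
  have hdθ : Differentiable ℝ θ := (contDiff_succ_iff_deriv.mp hθ3).1
  set f1 := deriv θ with hf1
  have h1 : ContDiff ℝ (1+1) f1 := by
    have := (contDiff_succ_iff_deriv.mp hθ3).2.2
    exact_mod_cast this
  have hd1 : Differentiable ℝ f1 := (contDiff_succ_iff_deriv.mp h1).1
  set f2 := deriv f1 with hf2
  have h2 : ContDiff ℝ (0+1) f2 := by
    have := (contDiff_succ_iff_deriv.mp h1).2.2
    exact_mod_cast this
  have hd2 : Differentiable ℝ f2 := (contDiff_succ_iff_deriv.mp h2).1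
  set f3 := deriv f2 with hf3
  have hc1 : Continuous f1 := hd1.continuous
  have hc2 : Continuous f2 := hd2.continuous
  have hcθ : Continuous θ := hdθ.continuous
  -- iteratedDeriv identifications
  have e2 : iteratedDeriv 2 θ = f2 := by
    rw [show (2:ℕ) = 1 + 1 from rfl, iteratedDeriv_succ, iteratedDeriv_one]
  have e3 : iteratedDeriv 3 θ = f3 := by
    rw [show (3:ℕ) = 2 + 1 from rfl, iteratedDeriv_succ, e2]
  -- periodicity of derivatives
  have derper : ∀ (g : ℝ → ℝ) (c : ℝ), (∀ z, g (z + 2*π) = g z + c) →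
      ∀ z, deriv g (z + 2*π) = deriv g z := by
    intro g c hg z
    have h1' : deriv (fun x => g (x + 2*π)) z = deriv g (z + 2*π) :=
      deriv_comp_add_const g (2*π) z
    have h2' : (fun x => g (x + 2*π)) = fun x => g x + c := funext hg
    rw [h2'] at h1'
    simp only [deriv_add_const] at h1'
    exact h1'.symm
  have hp1 : ∀ z, f1 (z + 2*π) = f1 z := derper θ (2*π) hper
  have hp2 : ∀ z, f2 (z + 2*π) = f2 z := derper f1 0 (fun z => by rw [hp1 z]; ring)
  have hθ2π : θ (2*π) = θ 0 + 2*π := by simpa using hper 0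
  have hf12π : f1 (2*π) = f1 0 := by simpa using hp1 0
  have hf22π : f2 (2*π) = f2 0 := by simpa using hp2 0
  -- basic HasDerivAt facts
  have hdθ' : ∀ x, HasDerivAt θ (f1 x) x := fun x => (hdθ x).hasDerivAt
  have hd1' : ∀ x, HasDerivAt f1 (f2 x) x := fun x => (hd1 x).hasDerivAt
  have hd2' : ∀ x, HasDerivAt f2 (f3 x) x := fun x => (hd2 x).hasDerivAt
  ---------------------------------------------------------------
  -- Step 1 (lower bound): integrate the ODE over a period.
  -- ∫ ((α ω f1 - γ) + sin θ) = 0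
  have key1 : ∫ x in (0:ℝ)..(2*π), ((α*ω*f1 x - γ) + Real.sin (θ x)) = 0 := by
    have hasD : ∀ x ∈ Set.uIcc (0:ℝ) (2*π),
        HasDerivAt (fun x => β*ω*k^2 * f2 x + (k^2-ω^2) * f1 x)
          ((α*ω*f1 x - γ) + Real.sin (θ x)) x := by
      intro x _
      have h := ((hd2' x).const_mul (β*ω*k^2)).add ((hd1' x).const_mul (k^2-ω^2))
      have heq : (α*ω*f1 x - γ) + Real.sin (θ x)
          = β*ω*k^2 * f3 x + (k^2-ω^2) * f2 x := by
        have h0 := hODE x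
        rw [e2, e3] at h0
        linarith
      rw [heq]
      exact h
    have hint : IntervalIntegrable (fun x => (α*ω*f1 x - γ) + Real.sin (θ x))
        volume 0 (2*π) :=
      (((continuous_const.mul hc1).sub continuous_const).add (Real.continuous_sin.comp hcθ)).intervalIntegrable _ _
    have := integral_eq_sub_of_hasDerivAt hasD hint
    rw [this, hf12π, hf22π]
    ring
  have split1 : ∫ x in (0:ℝ)..(2*π), (α*ω*f1 x - γ)
      = α*ω*(2*π) - γ*(2*π) := by
    have hasD : ∀ x ∈ Set.uIcc (0:ℝ) (2*π),
        HasDerivAt (fun x => α*ω*θ x - γ*x) (α*ω*f1 x - γ) x := by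
      intro x _
      exact (((hdθ' x).const_mul (α*ω)).sub ((hasDerivAt_id x).const_mul γ)).congr_deriv (by ring)
    have hint : IntervalIntegrable (fun x => α*ω*f1 x - γ) volume 0 (2*π) :=
      ((continuous_const.mul hc1).sub continuous_const).intervalIntegrable _ _
    have := integral_eq_sub_of_hasDerivAt hasD hint
    rw [this, hθ2π]
    ring
  have sin_int : ∫ x in (0:ℝ)..(2*π), Real.sin (θ x)
      = -(α*ω*(2*π) - γ*(2*π)) := by
    have hadd := integral_add (μ := volume) (a := 0) (b := 2*π)
      (f := fun x => α*ω*f1 x - γ) (g := fun x => Real.sin (θ x))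
      (((continuous_const.mul hc1).sub continuous_const).intervalIntegrable 0 (2*π))
      ((Real.continuous_sin.comp hcθ).intervalIntegrable 0 (2*π))
    rw [hadd, split1] at key1
    linarith
  have sin_le : ∫ x in (0:ℝ)..(2*π), Real.sin (θ x) ≤ 2*π := by
    calc ∫ x in (0:ℝ)..(2*π), Real.sin (θ x)
        ≤ ∫ _x in (0:ℝ)..(2*π), (1:ℝ) := by
          apply integral_mono_on (by positivity)
            ((Real.continuous_sin.comp hcθ).intervalIntegrable _ _)
            (intervalIntegrable_const)
          intro x _
          exact Real.sin_le_one _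
      _ = 2*π := by simp
  have lower : γ - 1 ≤ α * ω := by nlinarith
  ---------------------------------------------------------------
  -- Step 2 (upper bound): multiply the ODE by θ' and integrate.
  have key2 : ∫ x in (0:ℝ)..(2*π),
      ((α*ω*(f1 x * f1 x) + β*ω*k^2*(f2 x * f2 x))
        + (Real.sin (θ x) * f1 x - γ * f1 x)) = 0 := by
    have hasD : ∀ x ∈ Set.uIcc (0:ℝ) (2*π),
        HasDerivAt (fun x => β*ω*k^2*(f2 x * f1 x) + (k^2-ω^2)*(f1 x * f1 x)/2)
          ((α*ω*(f1 x * f1 x) + β*ω*k^2*(f2 x * f2 x))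
            + (Real.sin (θ x) * f1 x - γ * f1 x)) x := by
      intro x _
      have hA : HasDerivAt (fun x => f2 x * f1 x) (f3 x * f1 x + f2 x * f2 x) x :=
        (hd2' x).mul (hd1' x)
      have hB : HasDerivAt (fun x => f1 x * f1 x) (f2 x * f1 x + f1 x * f2 x) x :=
        (hd1' x).mul (hd1' x)
      have h := (hA.const_mul (β*ω*k^2)).add ((hB.const_mul (k^2-ω^2)).div_const 2)
      have heq : (α*ω*(f1 x * f1 x) + β*ω*k^2*(f2 x * f2 x))
            + (Real.sin (θ x) * f1 x - γ * f1 x)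
          = β*ω*k^2*(f3 x * f1 x + f2 x * f2 x)
            + (k^2-ω^2)*(f2 x * f1 x + f1 x * f2 x)/2 := by
        have h0 := hODE x
        rw [e2, e3] at h0
        linear_combination (-(f1 x)) * h0
      rw [heq]
      exact h
    have hint : IntervalIntegrable (fun x =>
        (α*ω*(f1 x * f1 x) + β*ω*k^2*(f2 x * f2 x))
          + (Real.sin (θ x) * f1 x - γ * f1 x)) volume 0 (2*π) := by
      exact (((continuous_const.mul (hc1.mul hc1)).add
          (continuous_const.mul (hc2.mul hc2))).add
          (((Real.continuous_sin.comp hcθ).mul hc1).sub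
            (continuous_const.mul hc1))).intervalIntegrable _ _
    have := integral_eq_sub_of_hasDerivAt hasD hint
    rw [this, hf12π, hf22π]
    ring
  have split2 : ∫ x in (0:ℝ)..(2*π), (Real.sin (θ x) * f1 x - γ * f1 x)
      = - γ*(2*π) := by
    have hasD : ∀ x ∈ Set.uIcc (0:ℝ) (2*π),
        HasDerivAt (fun x => -Real.cos (θ x) - γ * θ x)
          (Real.sin (θ x) * f1 x - γ * f1 x) x := by
      intro x _
      have hcos : HasDerivAt (fun x => Real.cos (θ x)) (-Real.sin (θ x) * f1 x) x :=
        (Real.hasDerivAt_cos (θ x)).comp x (hdθ' x)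
      have := hcos.neg.sub ((hdθ' x).const_mul γ)
      exact this.congr_deriv (by ring)
    have hint : IntervalIntegrable
        (fun x => Real.sin (θ x) * f1 x - γ * f1 x) volume 0 (2*π) :=
      (((Real.continuous_sin.comp hcθ).mul hc1).sub (continuous_const.mul hc1)).intervalIntegrable _ _
    have := integral_eq_sub_of_hasDerivAt hasD hint
    rw [this, hθ2π, Real.cos_add_two_pi]
    ring
  have S_eq : ∫ x in (0:ℝ)..(2*π), (α*ω*(f1 x * f1 x) + β*ω*k^2*(f2 x * f2 x))
      = γ*(2*π) := by
    have hadd := integral_add (μ := volume) (a := 0) (b := 2*π)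
      (f := fun x => α*ω*(f1 x * f1 x) + β*ω*k^2*(f2 x * f2 x))
      (g := fun x => Real.sin (θ x) * f1 x - γ * f1 x)
      (((continuous_const.mul (hc1.mul hc1)).add (continuous_const.mul (hc2.mul hc2))).intervalIntegrable 0 (2*π))
      ((((Real.continuous_sin.comp hcθ).mul hc1).sub (continuous_const.mul hc1)).intervalIntegrable 0 (2*π))
    rw [hadd, split2] at key2
    linarith
  -- ∫ αω f1² ≤ 2πγ
  have C_le : ∫ x in (0:ℝ)..(2*π), α*ω*(f1 x * f1 x) ≤ γ*(2*π) := by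
    rw [← S_eq]
    apply integral_mono_on (by positivity)
      ((continuous_const.mul (hc1.mul hc1)).intervalIntegrable _ _)
      (((continuous_const.mul (hc1.mul hc1)).add (continuous_const.mul (hc2.mul hc2))).intervalIntegrable _ _)
    intro x _
    show α*ω*(f1 x * f1 x) ≤ α*ω*(f1 x * f1 x) + β*ω*k^2*(f2 x * f2 x)
    nlinarith [sq_nonneg (f2 x), mul_pos (mul_pos hβ hω) (mul_pos hk hk)]
  -- C = ∫ f1² ≥ 2π
  have C_ge : 2*π ≤ ∫ x in (0:ℝ)..(2*π), (f1 x * f1 x) := by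
    have decomp : ∀ x, f1 x * f1 x = (f1 x - 1)^2 + (2*f1 x - 1) := by
      intro x; ring
    have hadd : ∫ x in (0:ℝ)..(2*π), (f1 x * f1 x)
        = (∫ x in (0:ℝ)..(2*π), (f1 x - 1)^2)
          + ∫ x in (0:ℝ)..(2*π), (2*f1 x - 1) := by
      rw [← integral_add (f := fun x => (f1 x - 1)^2) (g := fun x => 2*f1 x - 1)
        (((hc1.sub continuous_const).pow 2).intervalIntegrable _ _)
        (((continuous_const.mul hc1).sub continuous_const).intervalIntegrable _ _)]
      exact intervalIntegral.integral_congr (fun x _ => decomp x)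
    have hsq : (0:ℝ) ≤ ∫ x in (0:ℝ)..(2*π), (f1 x - 1)^2 :=
      integral_nonneg (by positivity) (fun x _ => sq_nonneg _)
    have hlin : ∫ x in (0:ℝ)..(2*π), (2*f1 x - 1) = 2*π := by
      have hasD : ∀ x ∈ Set.uIcc (0:ℝ) (2*π),
          HasDerivAt (fun x => 2*θ x - x) (2*f1 x - 1) x := by
        intro x _
        exact ((hdθ' x).const_mul 2).sub (hasDerivAt_id x)
      have hint : IntervalIntegrable (fun x => 2*f1 x - 1) volume 0 (2*π) :=
        ((continuous_const.mul hc1).sub continuous_const).intervalIntegrable _ _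
      have := integral_eq_sub_of_hasDerivAt hasD hint
      rw [this, hθ2π]
      ring
    rw [hadd, hlin]
    linarith
  have C_mul : α*ω*(∫ x in (0:ℝ)..(2*π), (f1 x * f1 x))
      = ∫ x in (0:ℝ)..(2*π), α*ω*(f1 x * f1 x) := by
    rw [intervalIntegral.integral_const_mul]
  have upper : α * ω ≤ γ := by
    have h1' : α*ω*(2*π) ≤ α*ω*(∫ x in (0:ℝ)..(2*π), (f1 x * f1 x)) := by
      apply mul_le_mul_of_nonneg_left C_ge (by positivity)
    rw [C_mul] at h1'
    have := le_trans h1' C_le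
    nlinarith
  constructor
  · rw [div_le_iff₀ hα]; linarith
  · rw [le_div_iff₀ hα]; linarith
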